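/- Let G be an (r,s)-directed hypergraph with anadiplosis components G₁,...,G_k, and suppose r/p + s/q < 1. Then λ_{p,q}(G) = ( ∑_{i=1}^k λ_{p,q}(G_i)^{1/(1−(r/p+s/q))} )^{1−(r/p+s/q)}. -/

import Mathlib

/-- An `(r,s)`-directed hypergraph with tail vertices `Fin m`, head vertices
`Fin n`, and arcs indexed by a type `E`. -/
structure DirHypergraph (m n : ℕ) (E : Type) (r s : ℕ) where
  tail : E → Finset (Fin m)
  head : E → Finset (Fin n)
  tail_card : ∀ e, (tail e).card = r
  head_card : ∀ e, (head e).card = s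

namespace DirHypergraph

noncomputable def pnorm {k : ℕ} (p : ℝ) (x : Fin k → ℝ) : ℝ :=
  (∑ i, |x i| ^ p) ^ (1 / p)

variable {m n r s : ℕ} {E : Type} [Fintype E]

noncomputable def polyForm (G : DirHypergraph m n E r s)
    (x : Fin m → ℝ) (y : Fin n → ℝ) : ℝ :=
  ∑ e, (∏ u ∈ G.tail e, x u) * ∏ v ∈ G.head e, y v

noncomputable def specRad (G : DirHypergraph m n E r s) (p q : ℝ) : ℝ :=
  sSup {z | ∃ x y, pnorm p x = 1 ∧ pnorm q y = 1 ∧ z = G.polyForm x y}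

/-- Membership of a vertex (tail copy `Sum.inl` / head copy `Sum.inr`) in an arc. -/
def memArc (G : DirHypergraph m n E r s) : (Fin m ⊕ Fin n) → E → Prop
  | Sum.inl u, e => u ∈ G.tail e
  | Sum.inr v, e => v ∈ G.head e

/-- Two vertices are adjacent when some arc contains both. -/
def adj (G : DirHypergraph m n E r s) (a b : Fin m ⊕ Fin n) : Prop :=
  ∃ e, G.memArc a e ∧ G.memArc b e

/-- Anadiplosis connectedness, expressed as connectedness of the underlying
hypergraph of the bipartite split. -/
def Connected (G : DirHypergraph m n E r s) : Prop :=
  ∀ a b, (∃ e, G.memArc a e) → (∃ e, G.memArc b e) →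
    Relation.ReflTransGen G.adj a b

/-- The subhypergraph formed by the arcs in class `i` of the partition `c`. -/
def restrict {N k : ℕ} (G : DirHypergraph m n (Fin N) r s)
    (c : Fin N → Fin k) (i : Fin k) :
    DirHypergraph m n {e : Fin N // c e = i} r s where
  tail e := G.tail e.1
  head e := G.head e.1
  tail_card e := G.tail_card e.1
  head_card e := G.head_card e.1

end DirHypergraph
section AuxProof

namespace DirHypergraph

open Finset Real

/-- Standard basis vector. -/
noncomputable def unitVec (k : ℕ) (i : Fin k) : Fin k → ℝ := fun j => if j = i then 1 else 0

variable {m n r s : ℕ} {E : Type} [Fintype E]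

lemma pnorm_eq_one_iff {k : ℕ} {p : ℝ} (hp0 : 0 < p) (x : Fin k → ℝ) :
    pnorm p x = 1 ↔ ∑ i, |x i| ^ p = 1 := by
  unfold pnorm
  constructor
  · intro h
    have hS : 0 ≤ ∑ i, |x i| ^ p := Finset.sum_nonneg fun i _ => Real.rpow_nonneg (abs_nonneg _) _
    have := congrArg (fun z : ℝ => z ^ p) h
    simpa [← Real.rpow_mul hS, one_div, inv_mul_cancel₀ hp0.ne'] using this
  · intro h; rw [h, Real.one_rpow]

lemma pnorm_unitVec {k : ℕ} {p : ℝ} (hp0 : 0 < p) (i : Fin k) :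
    pnorm p (unitVec k i) = 1 := by
  rw [pnorm_eq_one_iff hp0]
  have : ∀ j, |unitVec k i j| ^ p = if j = i then 1 else 0 := by
    intro j
    by_cases h : j = i <;> simp [unitVec, h, Real.zero_rpow hp0.ne', Real.one_rpow]
  simp [this]

lemma continuous_pnorm {k : ℕ} {p : ℝ} (hp : 1 ≤ p) :
    Continuous fun x : Fin k → ℝ => pnorm p x := by
  have hp0 : 0 < p := lt_of_lt_of_le one_pos hp
  unfold pnorm
  apply Continuous.rpow_const
  · exact continuous_finset_sum _ fun i _ =>
      ((continuous_abs.comp (continuous_apply i)).rpow_const fun x => Or.inr hp0.le)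
  · intro x; exact Or.inr (by positivity)

lemma continuous_polyForm (G : DirHypergraph m n E r s) :
    Continuous fun xy : (Fin m → ℝ) × (Fin n → ℝ) => G.polyForm xy.1 xy.2 := by
  unfold polyForm
  apply continuous_finset_sum
  intro e _
  exact ((continuous_finset_prod _ fun u _ => (continuous_apply u).comp continuous_fst).mul
    (continuous_finset_prod _ fun v _ => (continuous_apply v).comp continuous_snd))

lemma isCompact_sphere' {k : ℕ} {p : ℝ} (hp : 1 ≤ p) :
    IsCompact {x : Fin k → ℝ | pnorm p x = 1} := by
  have hp0 : 0 < p := lt_of_lt_of_le one_pos hp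
  have hclosed : IsClosed {x : Fin k → ℝ | pnorm p x = 1} :=
    isClosed_eq (continuous_pnorm hp) continuous_const
  have hbdd : Bornology.IsBounded {x : Fin k → ℝ | pnorm p x = 1} := by
    apply Bornology.IsBounded.subset (Metric.isBounded_closedBall (x := (0 : Fin k → ℝ)) (r := 1))
    intro x hx
    have hsum : ∑ i, |x i| ^ p = 1 := (pnorm_eq_one_iff hp0 x).1 hx
    simp only [Metric.mem_closedBall, dist_zero_right]
    rw [pi_norm_le_iff_of_nonneg zero_le_one]
    intro i
    rw [Real.norm_eq_abs]
    by_contra hgt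
    push_neg at hgt
    have h1 : (1:ℝ) < |x i| ^ p := by
      calc (1:ℝ) = 1 ^ p := (Real.one_rpow p).symm
      _ < |x i| ^ p := Real.rpow_lt_rpow zero_le_one hgt hp0
    have hle : |x i| ^ p ≤ ∑ i, |x i| ^ p :=
      Finset.single_le_sum (fun i _ => Real.rpow_nonneg (abs_nonneg _) _) (mem_univ i)
    rw [hsum] at hle; linarith
  exact Metric.isCompact_of_isClosed_isBounded hclosed hbdd

lemma sphere_image_eq (G : DirHypergraph m n E r s) (p q : ℝ) :
    {z | ∃ x y, pnorm p x = 1 ∧ pnorm q y = 1 ∧ z = G.polyForm x y} =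
      (fun xy : (Fin m → ℝ) × (Fin n → ℝ) => G.polyForm xy.1 xy.2) ''
        ({x | pnorm p x = 1} ×ˢ {y | pnorm q y = 1}) := by
  ext z
  constructor
  · rintro ⟨x, y, hx, hy, rfl⟩; exact ⟨(x, y), ⟨hx, hy⟩, rfl⟩
  · rintro ⟨⟨x, y⟩, ⟨hx, hy⟩, rfl⟩; exact ⟨x, y, hx, hy, rfl⟩

lemma isCompact_polySet (G : DirHypergraph m n E r s) {p q : ℝ} (hp : 1 ≤ p) (hq : 1 ≤ q) :
    IsCompact {z | ∃ x y, pnorm p x = 1 ∧ pnorm q y = 1 ∧ z = G.polyForm x y} := by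
  rw [sphere_image_eq]
  exact (IsCompact.prod (isCompact_sphere' hp) (isCompact_sphere' hq)).image
    (continuous_polyForm G)

lemma polySet_nonempty (G : DirHypergraph m n E r s) {p q : ℝ} (hm : 0 < m) (hn : 0 < n)
    (hp0 : 0 < p) (hq0 : 0 < q) :
    Set.Nonempty {z | ∃ x y, pnorm p x = 1 ∧ pnorm q y = 1 ∧ z = G.polyForm x y} :=
  ⟨_, unitVec m ⟨0, hm⟩, unitVec n ⟨0, hn⟩, pnorm_unitVec hp0 _, pnorm_unitVec hq0 _, rfl⟩

lemma le_specRad (G : DirHypergraph m n E r s) {p q : ℝ} (hp : 1 ≤ p) (hq : 1 ≤ q)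
    {x y} (hx : pnorm p x = 1) (hy : pnorm q y = 1) :
    G.polyForm x y ≤ G.specRad p q :=
  le_csSup (G.isCompact_polySet hp hq).bddAbove ⟨x, y, hx, hy, rfl⟩

lemma exists_optimizer (G : DirHypergraph m n E r s) {p q : ℝ} (hm : 0 < m) (hn : 0 < n)
    (hp : 1 ≤ p) (hq : 1 ≤ q) :
    ∃ x y, pnorm p x = 1 ∧ pnorm q y = 1 ∧ G.polyForm x y = G.specRad p q := by
  have h := (G.isCompact_polySet hp hq).sSup_mem
    (G.polySet_nonempty hm hn (lt_of_lt_of_le one_pos hp) (lt_of_lt_of_le one_pos hq))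
  obtain ⟨x, y, hx, hy, h⟩ := h
  exact ⟨x, y, hx, hy, h.symm⟩

lemma specRad_pos (G : DirHypergraph m n E r s) [Nonempty E] {p q : ℝ} (hm : 0 < m) (hn : 0 < n)
    (hp : 1 ≤ p) (hq : 1 ≤ q) : 0 < G.specRad p q := by
  have hp0 : 0 < p := lt_of_lt_of_le one_pos hp
  have hq0 : 0 < q := lt_of_lt_of_le one_pos hq
  have hmpos : (0:ℝ) < m := by exact_mod_cast hm
  have hnpos : (0:ℝ) < n := by exact_mod_cast hn
  set x : Fin m → ℝ := fun _ => (m:ℝ) ^ (-(1/p)) with hxdef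
  set y : Fin n → ℝ := fun _ => (n:ℝ) ^ (-(1/q)) with hydef
  have hxval : 0 < (m:ℝ) ^ (-(1/p)) := Real.rpow_pos_of_pos hmpos _
  have hyval : 0 < (n:ℝ) ^ (-(1/q)) := Real.rpow_pos_of_pos hnpos _
  have hx : pnorm p x = 1 := by
    rw [pnorm_eq_one_iff hp0]
    have h1 : |(m:ℝ) ^ (-(1/p))| ^ p = (m:ℝ)⁻¹ := by
      rw [abs_of_pos hxval, ← Real.rpow_mul hmpos.le,
        show (-(1/p)) * p = -1 by field_simp, Real.rpow_neg_one]
    simp only [hxdef, h1, Finset.sum_const, card_univ, Fintype.card_fin, nsmul_eq_mul]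
    exact mul_inv_cancel₀ hmpos.ne'
  have hy : pnorm q y = 1 := by
    rw [pnorm_eq_one_iff hq0]
    have h1 : |(n:ℝ) ^ (-(1/q))| ^ q = (n:ℝ)⁻¹ := by
      rw [abs_of_pos hyval, ← Real.rpow_mul hnpos.le,
        show (-(1/q)) * q = -1 by field_simp, Real.rpow_neg_one]
    simp only [hydef, h1, Finset.sum_const, card_univ, Fintype.card_fin, nsmul_eq_mul]
    exact mul_inv_cancel₀ hnpos.ne'
  have hval : 0 < G.polyForm x y := by
    unfold polyForm
    apply Finset.sum_pos
    · intro e _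
      exact mul_pos (Finset.prod_pos fun u _ => hxval) (Finset.prod_pos fun v _ => hyval)
    · exact univ_nonempty
  exact lt_of_lt_of_le hval (G.le_specRad hp hq hx hy)

/-- Reverse the direction of all arcs. -/
def flip (G : DirHypergraph m n E r s) : DirHypergraph n m E s r :=
  ⟨G.head, G.tail, G.head_card, G.tail_card⟩

lemma polyForm_flip (G : DirHypergraph m n E r s) (x : Fin m → ℝ) (y : Fin n → ℝ) :
    G.flip.polyForm y x = G.polyForm x y := by
  unfold polyForm flip
  simp [mul_comm]

lemma pnorm_abs {k : ℕ} (p : ℝ) (x : Fin k → ℝ) :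
    pnorm p (fun i => |x i|) = pnorm p x := by
  unfold pnorm; simp

lemma polyForm_le_abs (G : DirHypergraph m n E r s) (x : Fin m → ℝ) (y : Fin n → ℝ) :
    G.polyForm x y ≤ G.polyForm (fun u => |x u|) (fun v => |y v|) := by
  unfold polyForm
  apply Finset.sum_le_sum
  intro e _
  calc (∏ u ∈ G.tail e, x u) * ∏ v ∈ G.head e, y v
      ≤ |(∏ u ∈ G.tail e, x u) * ∏ v ∈ G.head e, y v| := le_abs_self _
    _ = (∏ u ∈ G.tail e, |x u|) * ∏ v ∈ G.head e, |y v| := by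
        rw [abs_mul, Finset.abs_prod, Finset.abs_prod]

lemma left_reduce {E' : Type} [Fintype E'] (G' : DirHypergraph m n E' r s)
    {p : ℝ} (hp : 1 ≤ p) (hm : 0 < m)
    {x : Fin m → ℝ} (hx : ∀ u, 0 ≤ x u)
    (T : Finset (Fin m)) (hT : ∀ e, G'.tail e ⊆ T) (hTne : r ≠ 0 → T.Nonempty) :
    ∃ x' : Fin m → ℝ, pnorm p x' = 1 ∧ (∀ u, 0 ≤ x' u) ∧ (r ≠ 0 → ∀ u ∉ T, x' u = 0) ∧
      ∀ y, G'.polyForm x y = (∑ u ∈ T, x u ^ p) ^ ((r:ℝ)/p) * G'.polyForm x' y := by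
  classical
  have hp0 : 0 < p := lt_of_lt_of_le one_pos hp
  set A := ∑ u ∈ T, x u ^ p with hAdef
  have hAnn : 0 ≤ A := Finset.sum_nonneg fun u _ => Real.rpow_nonneg (hx u) _
  rcases eq_or_lt_of_le hAnn with hA0 | hApos
  · -- the degenerate case `A = 0`
    have hxz : ∀ u ∈ T, x u = 0 := by
      intro u hu
      have h1 : x u ^ p = 0 :=
        (Finset.sum_eq_zero_iff_of_nonneg fun u _ => Real.rpow_nonneg (hx u) _).1 hA0.symm u hu
      exact (Real.rpow_eq_zero (hx u) hp0.ne').1 h1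
    by_cases hr : r = 0
    · refine ⟨unitVec m ⟨0, hm⟩, pnorm_unitVec hp0 _,
        fun u => by unfold unitVec; positivity,
        fun h => absurd hr h, fun y => ?_⟩
      have htail : ∀ e, G'.tail e = ∅ := fun e =>
        Finset.card_eq_zero.1 (by rw [G'.tail_card e, hr])
      rw [show ((r:ℝ)/p) = 0 by rw [hr]; norm_num, Real.rpow_zero, one_mul]
      unfold polyForm
      apply Finset.sum_congr rfl
      intro e _
      rw [htail e]
      simp
    · obtain ⟨u₀, hu₀⟩ := hTne hr
      refine ⟨unitVec m u₀, pnorm_unitVec hp0 _,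
        fun u => by unfold unitVec; positivity,
        fun _ u hu => by
          unfold unitVec
          exact if_neg (fun h : u = u₀ => hu (h ▸ hu₀)), fun y => ?_⟩
      have hLHS : G'.polyForm x y = 0 := by
        unfold polyForm
        apply Finset.sum_eq_zero
        intro e _
        have hne : (G'.tail e).Nonempty := by
          rw [← Finset.card_pos, G'.tail_card e]; exact Nat.pos_of_ne_zero hr
        obtain ⟨u, hu⟩ := hne
        rw [Finset.prod_eq_zero hu (hxz u (hT e hu)), zero_mul]
      have hrp : ((r:ℝ)/p) ≠ 0 := by
        apply div_ne_zero _ hp0.ne'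
        exact_mod_cast hr
      rw [hLHS, ← hA0, Real.zero_rpow hrp, zero_mul]
  · -- the main case `A > 0`
    set t := A ^ (1/p) with htdef
    have ht : 0 < t := Real.rpow_pos_of_pos hApos _
    set x' : Fin m → ℝ := fun u => if u ∈ T then x u / t else 0 with hx'def
    have hx'nn : ∀ u, 0 ≤ x' u := by
      intro u
      rw [hx'def]
      dsimp only
      split
      · exact div_nonneg (hx u) ht.le
      · exact le_refl 0
    have hnorm : pnorm p x' = 1 := by
      rw [pnorm_eq_one_iff hp0]
      have hterm : ∀ u, |x' u| ^ p = if u ∈ T then x u ^ p / A else 0 := by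
        intro u
        rw [hx'def]
        dsimp only
        by_cases hu : u ∈ T
        · rw [if_pos hu, if_pos hu, abs_of_nonneg (div_nonneg (hx u) ht.le),
            Real.div_rpow (hx u) ht.le, htdef, ← Real.rpow_mul hAnn, one_div,
            inv_mul_cancel₀ hp0.ne', Real.rpow_one]
        · rw [if_neg hu, if_neg hu, abs_zero, Real.zero_rpow hp0.ne']
      rw [Finset.sum_congr rfl fun u _ => hterm u, Fintype.sum_ite_mem, ← Finset.sum_div,
        ← hAdef, div_self hApos.ne']
    refine ⟨x', hnorm, hx'nn, fun _ u hu => by rw [hx'def]; exact if_neg hu, fun y => ?_⟩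
    unfold polyForm
    rw [Finset.mul_sum]
    apply Finset.sum_congr rfl
    intro e _
    have hxu : ∀ u ∈ G'.tail e, x u = t * x' u := by
      intro u hu
      rw [hx'def]
      dsimp only
      rw [if_pos (hT e hu)]
      field_simp
    rw [Finset.prod_congr rfl hxu, Finset.prod_mul_distrib, Finset.prod_const, G'.tail_card e]
    have htr : t ^ r = A ^ ((r:ℝ)/p) := by
      rw [htdef, ← Real.rpow_natCast (A ^ (1/p)) r, ← Real.rpow_mul hAnn]
      congr 1
      field_simp
    rw [htr, mul_assoc]

lemma combine {k' m' r' : ℕ} {p : ℝ} (hp : 1 ≤ p) (hm : 0 < m')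
    (w : Fin k' → ℝ) (hw : ∀ i, 0 ≤ w i) (hw1 : ∑ i, w i = 1)
    (T : Fin k' → Finset (Fin m')) (hdisj : ∀ i j, i ≠ j → ∀ u ∈ T i, u ∉ T j)
    (xh : Fin k' → Fin m' → ℝ) (hxnn : ∀ i u, 0 ≤ xh i u)
    (hsupp : r' ≠ 0 → ∀ i, ∀ u ∉ T i, xh i u = 0)
    (hnorm : ∀ i, pnorm p (xh i) = 1) :
    ∃ xs : Fin m' → ℝ, pnorm p xs = 1 ∧
      ∀ i (A : Finset (Fin m')), A ⊆ T i → A.card = r' →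
        ∏ u ∈ A, xs u = w i ^ ((r':ℝ)/p) * ∏ u ∈ A, xh i u := by
  classical
  have hp0 : 0 < p := lt_of_lt_of_le one_pos hp
  by_cases hr : r' = 0
  · subst hr
    refine ⟨unitVec m' ⟨0, hm⟩, pnorm_unitVec hp0 _, ?_⟩
    intro i A hA hcard
    rw [Finset.card_eq_zero.1 hcard]
    simp
  · set xs : Fin m' → ℝ := fun u => ∑ i, w i ^ (1/p) * xh i u with hxsdef
    have hkey : ∀ i, ∀ u ∈ T i, xs u = w i ^ (1/p) * xh i u := by
      intro i u hu
      rw [hxsdef]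
      apply Finset.sum_eq_single i
      · intro j _ hji
        rw [hsupp hr j u (hdisj i j hji.symm u hu), mul_zero]
      · intro h; exact absurd (Finset.mem_univ i) h
    have hnn : ∀ u, 0 ≤ xs u := fun u => Finset.sum_nonneg fun i _ =>
      mul_nonneg (Real.rpow_nonneg (hw i) _) (hxnn i u)
    have hpt : ∀ u, |xs u| ^ p = ∑ i, w i * xh i u ^ p := by
      intro u
      by_cases hu : ∃ i, u ∈ T i
      · obtain ⟨i, hi⟩ := hu
        rw [hkey i u hi, abs_of_nonneg (mul_nonneg (Real.rpow_nonneg (hw i) _) (hxnn i u)),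
          Real.mul_rpow (Real.rpow_nonneg (hw i) _) (hxnn i u),
          ← Real.rpow_mul (hw i), one_div, inv_mul_cancel₀ hp0.ne', Real.rpow_one]
        symm
        apply Finset.sum_eq_single i
        · intro j _ hji
          rw [hsupp hr j u (hdisj i j hji.symm u hi), Real.zero_rpow hp0.ne', mul_zero]
        · intro h; exact absurd (Finset.mem_univ i) h
      · push_neg at hu
        have hz : ∀ i, xh i u = 0 := fun i => hsupp hr i u (hu i)
        have hxz : xs u = 0 := by
          rw [hxsdef]
          exact Finset.sum_eq_zero fun i _ => by rw [hz i, mul_zero]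
        rw [hxz, abs_zero, Real.zero_rpow hp0.ne']
        symm
        exact Finset.sum_eq_zero fun i _ => by rw [hz i, Real.zero_rpow hp0.ne', mul_zero]
    have hnorm' : pnorm p xs = 1 := by
      rw [pnorm_eq_one_iff hp0, Finset.sum_congr rfl fun u _ => hpt u, Finset.sum_comm]
      calc ∑ i, ∑ u, w i * xh i u ^ p = ∑ i, w i * ∑ u, xh i u ^ p := by
            simp [Finset.mul_sum]
        _ = ∑ i, w i := by
            apply Finset.sum_congr rfl
            intro i _
            have h1 := (pnorm_eq_one_iff hp0 (xh i)).1 (hnorm i)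
            have heq : ∑ u, xh i u ^ p = 1 := by
              rw [← h1]
              apply Finset.sum_congr rfl
              intro u _
              rw [abs_of_nonneg (hxnn i u)]
            rw [heq, mul_one]
        _ = 1 := hw1
    refine ⟨xs, hnorm', ?_⟩
    intro i A hA hcard
    rw [Finset.prod_congr rfl fun u hu => hkey i u (hA hu), Finset.prod_mul_distrib,
      Finset.prod_const, hcard]
    congr 1
    rw [← Real.rpow_natCast (w i ^ (1/p)) r', ← Real.rpow_mul (hw i)]
    congr 1
    field_simp

lemma holder3_pos {ι : Type*} (F : Finset ι) (a b c : ι → ℝ)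
    (ha : ∀ i ∈ F, 0 ≤ a i) (hb : ∀ i ∈ F, 0 ≤ b i) (hc : ∀ i ∈ F, 0 ≤ c i)
    {w₁ w₂ w₃ : ℝ} (hw₁ : 0 ≤ w₁) (hw₂ : 0 ≤ w₂) (hw₃ : 0 ≤ w₃) (hw : w₁ + w₂ + w₃ = 1)
    (hSa : 0 < ∑ i ∈ F, a i) (hSb : 0 < ∑ i ∈ F, b i) (hSc : 0 < ∑ i ∈ F, c i) :
    ∑ i ∈ F, a i ^ w₁ * b i ^ w₂ * c i ^ w₃ ≤
      (∑ i ∈ F, a i) ^ w₁ * (∑ i ∈ F, b i) ^ w₂ * (∑ i ∈ F, c i) ^ w₃ := by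
  set Sa := ∑ i ∈ F, a i with hSadef
  set Sb := ∑ i ∈ F, b i with hSbdef
  set Sc := ∑ i ∈ F, c i with hScdef
  set D := Sa ^ w₁ * Sb ^ w₂ * Sc ^ w₃ with hDdef
  have hD : 0 < D := by
    rw [hDdef]
    exact mul_pos (mul_pos (Real.rpow_pos_of_pos hSa _) (Real.rpow_pos_of_pos hSb _))
      (Real.rpow_pos_of_pos hSc _)
  have key : ∀ i ∈ F, a i ^ w₁ * b i ^ w₂ * c i ^ w₃ ≤
      (w₁ * (a i / Sa) + w₂ * (b i / Sb) + w₃ * (c i / Sc)) * D := by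
    intro i hi
    have h := Real.geom_mean_le_arith_mean3_weighted hw₁ hw₂ hw₃
      (div_nonneg (ha i hi) hSa.le) (div_nonneg (hb i hi) hSb.le)
      (div_nonneg (hc i hi) hSc.le) hw
    have hrw : (a i / Sa) ^ w₁ * (b i / Sb) ^ w₂ * (c i / Sc) ^ w₃ =
        a i ^ w₁ * b i ^ w₂ * c i ^ w₃ / D := by
      rw [Real.div_rpow (ha i hi) hSa.le, Real.div_rpow (hb i hi) hSb.le,
        Real.div_rpow (hc i hi) hSc.le, hDdef]
      field_simp
    rw [hrw] at h
    calc a i ^ w₁ * b i ^ w₂ * c i ^ w₃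
        = (a i ^ w₁ * b i ^ w₂ * c i ^ w₃ / D) * D := by field_simp
      _ ≤ _ := mul_le_mul_of_nonneg_right h hD.le
  calc ∑ i ∈ F, a i ^ w₁ * b i ^ w₂ * c i ^ w₃
      ≤ ∑ i ∈ F, (w₁ * (a i / Sa) + w₂ * (b i / Sb) + w₃ * (c i / Sc)) * D :=
        Finset.sum_le_sum key
    _ = (w₁ * (Sa / Sa) + w₂ * (Sb / Sb) + w₃ * (Sc / Sc)) * D := by
        rw [← Finset.sum_mul]
        congr 1
        rw [Finset.sum_add_distrib, Finset.sum_add_distrib, ← Finset.mul_sum, ← Finset.mul_sum,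
          ← Finset.mul_sum, ← Finset.sum_div, ← Finset.sum_div, ← Finset.sum_div]
    _ = D := by
        rw [div_self hSa.ne', div_self hSb.ne', div_self hSc.ne']
        rw [mul_one, mul_one, mul_one, hw, one_mul]

lemma holder3 {ι : Type*} (F : Finset ι) (a b c : ι → ℝ)
    (ha : ∀ i ∈ F, 0 ≤ a i) (hb : ∀ i ∈ F, 0 ≤ b i) (hc : ∀ i ∈ F, 0 ≤ c i)
    {w₁ w₂ w₃ : ℝ} (hw₁ : 0 ≤ w₁) (hw₂ : 0 ≤ w₂) (hw₃ : 0 ≤ w₃) (hw : w₁ + w₂ + w₃ = 1) :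
    ∑ i ∈ F, a i ^ w₁ * b i ^ w₂ * c i ^ w₃ ≤
      (∑ i ∈ F, a i) ^ w₁ * (∑ i ∈ F, b i) ^ w₂ * (∑ i ∈ F, c i) ^ w₃ := by
  classical
  rcases F.eq_empty_or_nonempty with rfl | hF
  · simp only [Finset.sum_empty]
    positivity
  by_cases hA : w₁ ≠ 0 ∧ ∑ i ∈ F, a i = 0
  · have haz : ∀ i ∈ F, a i = 0 := (Finset.sum_eq_zero_iff_of_nonneg ha).1 hA.2
    have hz : ∀ i ∈ F, a i ^ w₁ * b i ^ w₂ * c i ^ w₃ = 0 := fun i hi => by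
      rw [haz i hi, Real.zero_rpow hA.1, zero_mul, zero_mul]
    rw [Finset.sum_eq_zero hz, hA.2, Real.zero_rpow hA.1, zero_mul, zero_mul]
  by_cases hB : w₂ ≠ 0 ∧ ∑ i ∈ F, b i = 0
  · have hbz : ∀ i ∈ F, b i = 0 := (Finset.sum_eq_zero_iff_of_nonneg hb).1 hB.2
    have hz : ∀ i ∈ F, a i ^ w₁ * b i ^ w₂ * c i ^ w₃ = 0 := fun i hi => by
      rw [hbz i hi, Real.zero_rpow hB.1, mul_zero, zero_mul]
    rw [Finset.sum_eq_zero hz, hB.2, Real.zero_rpow hB.1, mul_zero, zero_mul]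
  by_cases hC : w₃ ≠ 0 ∧ ∑ i ∈ F, c i = 0
  · have hcz : ∀ i ∈ F, c i = 0 := (Finset.sum_eq_zero_iff_of_nonneg hc).1 hC.2
    have hz : ∀ i ∈ F, a i ^ w₁ * b i ^ w₂ * c i ^ w₃ = 0 := fun i hi => by
      rw [hcz i hi, Real.zero_rpow hC.1, mul_zero]
    rw [Finset.sum_eq_zero hz, hC.2, Real.zero_rpow hC.1, mul_zero]
  push_neg at hA hB hC
  set a' : ι → ℝ := fun i => if w₁ = 0 then 1 else a i with ha'def
  set b' : ι → ℝ := fun i => if w₂ = 0 then 1 else b i with hb'def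
  set c' : ι → ℝ := fun i => if w₃ = 0 then 1 else c i with hc'def
  have ha'nn : ∀ i ∈ F, 0 ≤ a' i := fun i hi => by
    rw [ha'def]; dsimp only; split
    · exact zero_le_one
    · exact ha i hi
  have hb'nn : ∀ i ∈ F, 0 ≤ b' i := fun i hi => by
    rw [hb'def]; dsimp only; split
    · exact zero_le_one
    · exact hb i hi
  have hc'nn : ∀ i ∈ F, 0 ≤ c' i := fun i hi => by
    rw [hc'def]; dsimp only; split
    · exact zero_le_one
    · exact hc i hi
  have hSa' : 0 < ∑ i ∈ F, a' i := by
    rw [ha'def]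
    by_cases h : w₁ = 0
    · simp only [h, if_true]
      rw [Finset.sum_const, nsmul_eq_mul, mul_one]
      exact_mod_cast Finset.card_pos.2 hF
    · simp only [h, if_false]
      exact lt_of_le_of_ne (Finset.sum_nonneg ha) (Ne.symm (hA h))
  have hSb' : 0 < ∑ i ∈ F, b' i := by
    rw [hb'def]
    by_cases h : w₂ = 0
    · simp only [h, if_true]
      rw [Finset.sum_const, nsmul_eq_mul, mul_one]
      exact_mod_cast Finset.card_pos.2 hF
    · simp only [h, if_false]
      exact lt_of_le_of_ne (Finset.sum_nonneg hb) (Ne.symm (hB h))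
  have hSc' : 0 < ∑ i ∈ F, c' i := by
    rw [hc'def]
    by_cases h : w₃ = 0
    · simp only [h, if_true]
      rw [Finset.sum_const, nsmul_eq_mul, mul_one]
      exact_mod_cast Finset.card_pos.2 hF
    · simp only [h, if_false]
      exact lt_of_le_of_ne (Finset.sum_nonneg hc) (Ne.symm (hC h))
  have key := holder3_pos F a' b' c' ha'nn hb'nn hc'nn hw₁ hw₂ hw₃ hw hSa' hSb' hSc'
  have hterm : ∀ (f f' : ι → ℝ) (w : ℝ), (f' = fun i => if w = 0 then 1 else f i) →
      ∀ i, f' i ^ w = f i ^ w := by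
    intro f f' w hdef i
    rw [hdef]
    dsimp only
    by_cases h : w = 0
    · rw [if_pos h, h, Real.rpow_zero, Real.rpow_zero]
    · rw [if_neg h]
  have hsum : ∀ (f f' : ι → ℝ) (w : ℝ), (f' = fun i => if w = 0 then 1 else f i) →
      (∑ i ∈ F, f' i) ^ w = (∑ i ∈ F, f i) ^ w := by
    intro f f' w hdef
    by_cases h : w = 0
    · rw [h, Real.rpow_zero, Real.rpow_zero]
    · rw [hdef]
      simp only [if_neg h]
  calc ∑ i ∈ F, a i ^ w₁ * b i ^ w₂ * c i ^ w₃
      = ∑ i ∈ F, a' i ^ w₁ * b' i ^ w₂ * c' i ^ w₃ := by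
        apply Finset.sum_congr rfl
        intro i _
        rw [hterm a a' w₁ ha'def i, hterm b b' w₂ hb'def i, hterm c c' w₃ hc'def i]
    _ ≤ (∑ i ∈ F, a' i) ^ w₁ * (∑ i ∈ F, b' i) ^ w₂ * (∑ i ∈ F, c' i) ^ w₃ := key
    _ = _ := by
        rw [hsum a a' w₁ ha'def, hsum b b' w₂ hb'def, hsum c c' w₃ hc'def]

lemma polyForm_le_mul {E' : Type} [Fintype E'] (G' : DirHypergraph m n E' r s)
    {p q : ℝ} (hp : 1 ≤ p) (hq : 1 ≤ q) (hm : 0 < m) (hn : 0 < n)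
    {x : Fin m → ℝ} {y : Fin n → ℝ} (hx : ∀ u, 0 ≤ x u) (hy : ∀ v, 0 ≤ y v)
    (T : Finset (Fin m)) (hT : ∀ e, G'.tail e ⊆ T) (hTne : r ≠ 0 → T.Nonempty)
    (Hs : Finset (Fin n)) (hH : ∀ e, G'.head e ⊆ Hs) (hHne : s ≠ 0 → Hs.Nonempty) :
    G'.polyForm x y ≤
      G'.specRad p q * (∑ u ∈ T, x u ^ p) ^ ((r:ℝ)/p) * (∑ v ∈ Hs, y v ^ q) ^ ((s:ℝ)/q) := by
  obtain ⟨x', hx'1, hx'nn, _, hx'eq⟩ := G'.left_reduce hp hm hx T hT hTne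
  obtain ⟨y', hy'1, hy'nn, _, hy'eq⟩ := G'.flip.left_reduce hq hn hy Hs hH hHne
  set B := (∑ u ∈ T, x u ^ p) ^ ((r:ℝ)/p) with hBdef
  set C := (∑ v ∈ Hs, y v ^ q) ^ ((s:ℝ)/q) with hCdef
  have hBnn : 0 ≤ B := Real.rpow_nonneg
    (Finset.sum_nonneg fun u _ => Real.rpow_nonneg (hx u) _) _
  have hCnn : 0 ≤ C := Real.rpow_nonneg
    (Finset.sum_nonneg fun v _ => Real.rpow_nonneg (hy v) _) _
  have h1 : G'.polyForm x y = B * G'.polyForm x' y := hx'eq y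
  have h2 : G'.polyForm x' y = C * G'.polyForm x' y' := by
    have h := hy'eq x'
    rw [polyForm_flip, polyForm_flip] at h
    exact h
  have h3 : G'.polyForm x' y' ≤ G'.specRad p q := G'.le_specRad hp hq hx'1 hy'1
  calc G'.polyForm x y = (B * C) * G'.polyForm x' y' := by rw [h1, h2]; ring
    _ ≤ (B * C) * G'.specRad p q :=
        mul_le_mul_of_nonneg_left h3 (mul_nonneg hBnn hCnn)
    _ = G'.specRad p q * B * C := by ring

lemma polyForm_decomp {N k : ℕ} (G : DirHypergraph m n (Fin N) r s) (c : Fin N → Fin k)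
    (x : Fin m → ℝ) (y : Fin n → ℝ) :
    G.polyForm x y = ∑ i, (G.restrict c i).polyForm x y := by
  classical
  unfold polyForm restrict
  dsimp only
  rw [← Finset.sum_fiberwise_of_maps_to (g := c) (fun e _ => Finset.mem_univ (c e))
    (fun e => (∏ u ∈ G.tail e, x u) * ∏ v ∈ G.head e, y v)]
  apply Finset.sum_congr rfl
  intro i _
  exact Finset.sum_subtype _ (fun e => by simp) _

end DirHypergraph

end AuxProof
/-- If `r/p + s/q < 1`, the `(p,q)`-spectral radius of an `(r,s)`-directed
hypergraph is obtained from those of its anadiplosis components by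
`λ_{p,q}(G) = (∑ᵢ λ_{p,q}(Gᵢ)^{1/(1−(r/p+s/q))})^{1−(r/p+s/q)}`. -/
theorem specRad_eq_sum_components (m n N k r s : ℕ) (hm : 0 < m) (hn : 0 < n)
    (G : DirHypergraph m n (Fin N) r s)
    (p q : ℝ) (hp : 1 ≤ p) (hq : 1 ≤ q)
    (he : (r : ℝ) / p + (s : ℝ) / q < 1)
    (c : Fin N → Fin k)
    (hcover : ∀ i, ∃ e, c e = i)
    (hsep : ∀ e f, (∃ a, G.memArc a e ∧ G.memArc a f) → c e = c f)
    (hconn : ∀ i, (G.restrict c i).Connected) :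
    G.specRad p q =
      (∑ i : Fin k, ((G.restrict c i).specRad p q) ^
          (1 / (1 - ((r : ℝ) / p + (s : ℝ) / q)))) ^
        (1 - ((r : ℝ) / p + (s : ℝ) / q)) := by
  classical
  have hp0 : 0 < p := lt_of_lt_of_le one_pos hp
  have hq0 : 0 < q := lt_of_lt_of_le one_pos hq
  set β : ℝ := 1 - ((r:ℝ)/p + (s:ℝ)/q) with hβdef
  have hβ : 0 < β := by rw [hβdef]; linarith
  have hrp : 0 ≤ (r:ℝ)/p := by positivity
  have hsq : 0 ≤ (s:ℝ)/q := by positivity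
  have hfib : ∀ i, Nonempty {e : Fin N // c e = i} := fun i => (hcover i).elim fun e he => ⟨⟨e, he⟩⟩
  set lam : Fin k → ℝ := fun i => (G.restrict c i).specRad p q with hlamdef
  have hlam : ∀ i, 0 < lam i := fun i => by
    haveI := hfib i
    exact (G.restrict c i).specRad_pos hm hn hp hq
  set W : ℝ := ∑ i, lam i ^ (1/β) with hWdef
  have hWnn : 0 ≤ W := by
    rw [hWdef]
    exact Finset.sum_nonneg fun i _ => Real.rpow_nonneg (hlam i).le _
  set T : Fin k → Finset (Fin m) :=
    fun i => Finset.univ.filter fun u => ∃ e, c e = i ∧ u ∈ G.tail e with hTdef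
  set Hs : Fin k → Finset (Fin n) :=
    fun i => Finset.univ.filter fun v => ∃ e, c e = i ∧ v ∈ G.head e with hHdef
  have hTmem : ∀ i u, u ∈ T i ↔ ∃ e, c e = i ∧ u ∈ G.tail e := by
    intro i u; rw [hTdef]; simp
  have hHmem : ∀ i v, v ∈ Hs i ↔ ∃ e, c e = i ∧ v ∈ G.head e := by
    intro i v; rw [hHdef]; simp
  have hTdisj : ∀ i j, i ≠ j → ∀ u ∈ T i, u ∉ T j := by
    intro i j hij u hui huj
    obtain ⟨e, hei, heu⟩ := (hTmem i u).1 hui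
    obtain ⟨f, hfj, hfu⟩ := (hTmem j u).1 huj
    exact hij (by rw [← hei, ← hfj]; exact hsep e f ⟨Sum.inl u, heu, hfu⟩)
  have hHdisj : ∀ i j, i ≠ j → ∀ v ∈ Hs i, v ∉ Hs j := by
    intro i j hij v hvi hvj
    obtain ⟨e, hei, hev⟩ := (hHmem i v).1 hvi
    obtain ⟨f, hfj, hfv⟩ := (hHmem j v).1 hvj
    exact hij (by rw [← hei, ← hfj]; exact hsep e f ⟨Sum.inr v, hev, hfv⟩)
  have hTsub : ∀ i (e : {e : Fin N // c e = i}), (G.restrict c i).tail e ⊆ T i :=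
    fun i e u hu => (hTmem i u).2 ⟨e.1, e.2, hu⟩
  have hHsub : ∀ i (e : {e : Fin N // c e = i}), (G.restrict c i).head e ⊆ Hs i :=
    fun i e v hv => (hHmem i v).2 ⟨e.1, e.2, hv⟩
  have hTne : ∀ i, r ≠ 0 → (T i).Nonempty := by
    intro i hr
    obtain ⟨e, he⟩ := hcover i
    have hne : (G.tail e).Nonempty := by
      rw [← Finset.card_pos, G.tail_card e]; exact Nat.pos_of_ne_zero hr
    obtain ⟨u, hu⟩ := hne
    exact ⟨u, (hTmem i u).2 ⟨e, he, hu⟩⟩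
  have hHne : ∀ i, s ≠ 0 → (Hs i).Nonempty := by
    intro i hs
    obtain ⟨e, he⟩ := hcover i
    have hne : (G.head e).Nonempty := by
      rw [← Finset.card_pos, G.head_card e]; exact Nat.pos_of_ne_zero hs
    obtain ⟨v, hv⟩ := hne
    exact ⟨v, (hHmem i v).2 ⟨e, he, hv⟩⟩
  have hdecomp : ∀ x y, G.polyForm x y = ∑ i, (G.restrict c i).polyForm x y :=
    DirHypergraph.polyForm_decomp G c
  -- UPPER BOUND
  have upper : G.specRad p q ≤ W ^ β := by
    unfold DirHypergraph.specRad
    apply Real.sSup_le _ (Real.rpow_nonneg hWnn β)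
    rintro z ⟨x, y, hx1, hy1, rfl⟩
    have hxs : ∑ u, |x u| ^ p = 1 := (DirHypergraph.pnorm_eq_one_iff hp0 x).1 hx1
    have hys : ∑ v, |y v| ^ q = 1 := (DirHypergraph.pnorm_eq_one_iff hq0 y).1 hy1
    set B : Fin k → ℝ := fun i => ∑ u ∈ T i, |x u| ^ p with hBdef
    set C : Fin k → ℝ := fun i => ∑ v ∈ Hs i, |y v| ^ q with hCdef
    have hBnn : ∀ i, 0 ≤ B i := fun i => by
      rw [hBdef]
      exact Finset.sum_nonneg fun u _ => Real.rpow_nonneg (abs_nonneg _) _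
    have hCnn : ∀ i, 0 ≤ C i := fun i => by
      rw [hCdef]
      exact Finset.sum_nonneg fun v _ => Real.rpow_nonneg (abs_nonneg _) _
    have hstep1 : G.polyForm x y ≤ ∑ i, lam i * B i ^ ((r:ℝ)/p) * C i ^ ((s:ℝ)/q) := by
      calc G.polyForm x y ≤ G.polyForm (fun u => |x u|) (fun v => |y v|) :=
            G.polyForm_le_abs x y
        _ = ∑ i, (G.restrict c i).polyForm (fun u => |x u|) (fun v => |y v|) := hdecomp _ _
        _ ≤ ∑ i, lam i * B i ^ ((r:ℝ)/p) * C i ^ ((s:ℝ)/q) := by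
            apply Finset.sum_le_sum
            intro i _
            exact (G.restrict c i).polyForm_le_mul hp hq hm hn
              (fun u => abs_nonneg _) (fun v => abs_nonneg _)
              (T i) (hTsub i) (hTne i) (Hs i) (hHsub i) (hHne i)
    have hBsum : ∑ i, B i ≤ 1 := by
      rw [← hxs]
      have hdisj : ((Finset.univ : Finset (Fin k)) : Set (Fin k)).PairwiseDisjoint T := by
        intro i _ j _ hij
        exact Finset.disjoint_left.2 fun u hu hu' => hTdisj i j hij u hu hu'
      calc ∑ i, B i = ∑ u ∈ Finset.univ.biUnion T, |x u| ^ p :=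
            (Finset.sum_biUnion hdisj).symm
        _ ≤ ∑ u, |x u| ^ p := by
            apply Finset.sum_le_sum_of_subset_of_nonneg (Finset.subset_univ _)
            intro u _ _
            exact Real.rpow_nonneg (abs_nonneg _) _
    have hCsum : ∑ i, C i ≤ 1 := by
      rw [← hys]
      have hdisj : ((Finset.univ : Finset (Fin k)) : Set (Fin k)).PairwiseDisjoint Hs := by
        intro i _ j _ hij
        exact Finset.disjoint_left.2 fun v hv hv' => hHdisj i j hij v hv hv'
      calc ∑ i, C i = ∑ v ∈ Finset.univ.biUnion Hs, |y v| ^ q :=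
            (Finset.sum_biUnion hdisj).symm
        _ ≤ ∑ v, |y v| ^ q := by
            apply Finset.sum_le_sum_of_subset_of_nonneg (Finset.subset_univ _)
            intro v _ _
            exact Real.rpow_nonneg (abs_nonneg _) _
    have hh := DirHypergraph.holder3 Finset.univ (fun i => lam i ^ (1/β)) B C
      (fun i _ => Real.rpow_nonneg (hlam i).le _) (fun i _ => hBnn i) (fun i _ => hCnn i)
      hβ.le hrp hsq (by rw [hβdef]; ring)
    have hlamrw : ∀ i, (lam i ^ (1/β)) ^ β = lam i := fun i => by
      rw [← Real.rpow_mul (hlam i).le, one_div, inv_mul_cancel₀ hβ.ne', Real.rpow_one]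
    have hstep2 : ∑ i, lam i * B i ^ ((r:ℝ)/p) * C i ^ ((s:ℝ)/q) ≤ W ^ β := by
      have hBS : 0 ≤ ∑ i, B i := Finset.sum_nonneg fun i _ => hBnn i
      have hCS : 0 ≤ ∑ i, C i := Finset.sum_nonneg fun i _ => hCnn i
      have h1 : (∑ i, B i) ^ ((r:ℝ)/p) ≤ 1 := Real.rpow_le_one hBS hBsum hrp
      have h2 : (∑ i, C i) ^ ((s:ℝ)/q) ≤ 1 := Real.rpow_le_one hCS hCsum hsq
      have h3 : 0 ≤ (∑ i, B i) ^ ((r:ℝ)/p) := Real.rpow_nonneg hBS _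
      have h4 : 0 ≤ (∑ i, C i) ^ ((s:ℝ)/q) := Real.rpow_nonneg hCS _
      have h5 : 0 ≤ W ^ β := Real.rpow_nonneg hWnn β
      calc ∑ i, lam i * B i ^ ((r:ℝ)/p) * C i ^ ((s:ℝ)/q)
          = ∑ i, (lam i ^ (1/β)) ^ β * B i ^ ((r:ℝ)/p) * C i ^ ((s:ℝ)/q) := by
            apply Finset.sum_congr rfl
            intro i _
            rw [hlamrw i]
        _ ≤ (∑ i, lam i ^ (1/β)) ^ β * (∑ i, B i) ^ ((r:ℝ)/p) * (∑ i, C i) ^ ((s:ℝ)/q) := hh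
        _ = W ^ β * (∑ i, B i) ^ ((r:ℝ)/p) * (∑ i, C i) ^ ((s:ℝ)/q) := by rw [← hWdef]
        _ ≤ W ^ β * 1 * (∑ i, C i) ^ ((s:ℝ)/q) := by
            apply mul_le_mul_of_nonneg_right _ h4
            exact mul_le_mul_of_nonneg_left h1 h5
        _ = W ^ β * (∑ i, C i) ^ ((s:ℝ)/q) := by ring
        _ ≤ W ^ β * 1 := mul_le_mul_of_nonneg_left h2 h5
        _ = W ^ β := mul_one _
    exact le_trans hstep1 hstep2
  -- LOWER BOUND
  have lower : W ^ β ≤ G.specRad p q := by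
    rcases Nat.eq_zero_or_pos k with hk | hk
    · subst hk
      have hW0 : W = 0 := by rw [hWdef]; simp
      rw [hW0, Real.zero_rpow hβ.ne']
      haveI hNE : IsEmpty (Fin N) := ⟨fun e => (c e).elim0⟩
      have h0 : G.polyForm (DirHypergraph.unitVec m ⟨0, hm⟩) (DirHypergraph.unitVec n ⟨0, hn⟩) = 0 := by
        unfold DirHypergraph.polyForm
        rw [Finset.univ_eq_empty, Finset.sum_empty]
      calc (0:ℝ) = _ := h0.symm
        _ ≤ G.specRad p q := G.le_specRad hp hq
            (DirHypergraph.pnorm_unitVec hp0 _) (DirHypergraph.pnorm_unitVec hq0 _)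
    · have hopt : ∀ i, ∃ x' y', DirHypergraph.pnorm p x' = 1 ∧ DirHypergraph.pnorm q y' = 1 ∧
          (∀ u, 0 ≤ x' u) ∧ (∀ v, 0 ≤ y' v) ∧
          (r ≠ 0 → ∀ u ∉ T i, x' u = 0) ∧ (s ≠ 0 → ∀ v ∉ Hs i, y' v = 0) ∧
          lam i ≤ (G.restrict c i).polyForm x' y' := by
        intro i
        haveI := hfib i
        obtain ⟨x, y, hx1, hy1, hxy⟩ := (G.restrict c i).exists_optimizer hm hn hp hq
        have habs : lam i ≤ (G.restrict c i).polyForm (fun u => |x u|) (fun v => |y v|) := by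
          calc lam i = (G.restrict c i).polyForm x y := hxy.symm
            _ ≤ _ := (G.restrict c i).polyForm_le_abs x y
        obtain ⟨x', hx'1, hx'nn, hx'supp, hx'eq⟩ :=
          (G.restrict c i).left_reduce hp hm (fun u => abs_nonneg (x u)) (T i) (hTsub i) (hTne i)
        have hBile : (∑ u ∈ T i, |x u| ^ p) ≤ 1 := by
          rw [← (DirHypergraph.pnorm_eq_one_iff hp0 x).1 hx1]
          apply Finset.sum_le_sum_of_subset_of_nonneg (Finset.subset_univ _)
          intro u _ _
          exact Real.rpow_nonneg (abs_nonneg _) _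
        have hBinn : 0 ≤ (∑ u ∈ T i, |x u| ^ p) :=
          Finset.sum_nonneg fun u _ => Real.rpow_nonneg (abs_nonneg _) _
        have hc1 : (∑ u ∈ T i, |x u| ^ p) ^ ((r:ℝ)/p) ≤ 1 := Real.rpow_le_one hBinn hBile hrp
        have hc0 : 0 ≤ (∑ u ∈ T i, |x u| ^ p) ^ ((r:ℝ)/p) := Real.rpow_nonneg hBinn _
        have hP1 : lam i ≤ (G.restrict c i).polyForm x' (fun v => |y v|) := by
          have h2 : lam i ≤ (∑ u ∈ T i, |x u| ^ p) ^ ((r:ℝ)/p) *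
              (G.restrict c i).polyForm x' (fun v => |y v|) := by
            rw [← hx'eq (fun v => |y v|)]
            exact habs
          rcases le_or_gt ((G.restrict c i).polyForm x' (fun v => |y v|)) 0 with hP | hP
          · linarith [mul_nonpos_of_nonneg_of_nonpos hc0 hP, hlam i]
          · have h3 := mul_le_of_le_one_left hP.le hc1
            linarith
        obtain ⟨y', hy'1, hy'nn, hy'supp, hy'eq⟩ :=
          (G.restrict c i).flip.left_reduce hq hn (fun v => abs_nonneg (y v)) (Hs i) (hHsub i) (hHne i)
        have hCile : (∑ v ∈ Hs i, |y v| ^ q) ≤ 1 := by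
          rw [← (DirHypergraph.pnorm_eq_one_iff hq0 y).1 hy1]
          apply Finset.sum_le_sum_of_subset_of_nonneg (Finset.subset_univ _)
          intro v _ _
          exact Real.rpow_nonneg (abs_nonneg _) _
        have hCinn : 0 ≤ (∑ v ∈ Hs i, |y v| ^ q) :=
          Finset.sum_nonneg fun v _ => Real.rpow_nonneg (abs_nonneg _) _
        have hd1 : (∑ v ∈ Hs i, |y v| ^ q) ^ ((s:ℝ)/q) ≤ 1 := Real.rpow_le_one hCinn hCile hsq
        have hd0 : 0 ≤ (∑ v ∈ Hs i, |y v| ^ q) ^ ((s:ℝ)/q) := Real.rpow_nonneg hCinn _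
        have hP2 : lam i ≤ (G.restrict c i).polyForm x' y' := by
          have h2 : lam i ≤ (∑ v ∈ Hs i, |y v| ^ q) ^ ((s:ℝ)/q) *
              (G.restrict c i).polyForm x' y' := by
            have h := hy'eq x'
            rw [DirHypergraph.polyForm_flip, DirHypergraph.polyForm_flip] at h
            rw [← h]
            exact hP1
          rcases le_or_gt ((G.restrict c i).polyForm x' y') 0 with hP | hP
          · linarith [mul_nonpos_of_nonneg_of_nonpos hd0 hP, hlam i]
          · have h3 := mul_le_of_le_one_left hP.le hd1
            linarith
        exact ⟨x', y', hx'1, hy'1, hx'nn, hy'nn, hx'supp, hy'supp, hP2⟩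
      choose xh yh hxh1 hyh1 hxhnn hyhnn hxhsupp hyhsupp hoptP using hopt
      haveI : Nonempty (Fin k) := ⟨⟨0, hk⟩⟩
      have hWpos : 0 < W := by
        rw [hWdef]
        exact Finset.sum_pos (fun i _ => Real.rpow_pos_of_pos (hlam i) _) Finset.univ_nonempty
      set w : Fin k → ℝ := fun i => lam i ^ (1/β) / W with hwdef
      have hwpos : ∀ i, 0 < w i := fun i => by
        rw [hwdef]
        exact div_pos (Real.rpow_pos_of_pos (hlam i) _) hWpos
      have hwnn : ∀ i, 0 ≤ w i := fun i => (hwpos i).le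
      have hw1 : ∑ i, w i = 1 := by
        rw [hwdef, ← Finset.sum_div, ← hWdef, div_self hWpos.ne']
      obtain ⟨xs, hxs1, hxsprod⟩ := DirHypergraph.combine hp hm w hwnn hw1 T hTdisj xh hxhnn
        (fun hr i u hu => hxhsupp i hr u hu) hxh1
      obtain ⟨ys, hys1, hysprod⟩ := DirHypergraph.combine hq hn w hwnn hw1 Hs hHdisj yh hyhnn
        (fun hs i v hv => hyhsupp i hs v hv) hyh1
      have hcomp : ∀ i, w i ^ ((r:ℝ)/p) * w i ^ ((s:ℝ)/q) * lam i ≤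
          (G.restrict c i).polyForm xs ys := by
        intro i
        have hpf : (G.restrict c i).polyForm xs ys =
            w i ^ ((r:ℝ)/p) * w i ^ ((s:ℝ)/q) * (G.restrict c i).polyForm (xh i) (yh i) := by
          unfold DirHypergraph.polyForm
          rw [Finset.mul_sum]
          apply Finset.sum_congr rfl
          intro e _
          rw [hxsprod i _ (hTsub i e) (G.tail_card e.1),
            hysprod i _ (hHsub i e) (G.head_card e.1)]
          ring
        rw [hpf]
        exact mul_le_mul_of_nonneg_left (hoptP i)
          (mul_nonneg (Real.rpow_nonneg (hwnn i) _) (Real.rpow_nonneg (hwnn i) _))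
      have hsum : ∑ i, w i ^ ((r:ℝ)/p) * w i ^ ((s:ℝ)/q) * lam i = W ^ β := by
        have hterm : ∀ i, w i ^ ((r:ℝ)/p) * w i ^ ((s:ℝ)/q) * lam i =
            lam i ^ (1/β) / W ^ (1-β) := by
          intro i
          rw [← Real.rpow_add (hwpos i), show (r:ℝ)/p + (s:ℝ)/q = 1 - β by rw [hβdef]; ring,
            hwdef]
          dsimp only
          rw [Real.div_rpow (Real.rpow_nonneg (hlam i).le _) hWnn,
            ← Real.rpow_mul (hlam i).le, div_mul_eq_mul_div]
          congr 1
          calc lam i ^ (1/β * (1-β)) * lam i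
              = lam i ^ (1/β * (1-β)) * lam i ^ (1:ℝ) := by rw [Real.rpow_one]
            _ = lam i ^ (1/β * (1-β) + 1) := (Real.rpow_add (hlam i) _ _).symm
            _ = lam i ^ (1/β) := by
                congr 1
                field_simp
                ring
        rw [Finset.sum_congr rfl fun i _ => hterm i, ← Finset.sum_div, ← hWdef,
          div_eq_iff (Real.rpow_pos_of_pos hWpos (1-β)).ne', ← Real.rpow_add hWpos,
          show β + (1-β) = 1 by ring, Real.rpow_one]
      calc W ^ β = ∑ i, w i ^ ((r:ℝ)/p) * w i ^ ((s:ℝ)/q) * lam i := hsum.symm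
        _ ≤ ∑ i, (G.restrict c i).polyForm xs ys := Finset.sum_le_sum fun i _ => hcomp i
        _ = G.polyForm xs ys := (hdecomp xs ys).symm
        _ ≤ G.specRad p q := G.le_specRad hp hq hxs1 hys1
  exact le_antisymm upper lower
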